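/- arXiv:2507.02247 — 2 statements merged into one kernel-verified Lean document; each statement's English description precedes it below -/
import Mathlib

section
/- Let s > 0, let g : ℝ → ℝ be defined by g(x) = Σ_{j=3}^∞ j^{−2} 2^{−js} cos((11/8)·2^j·x), and for n ≥ 3 set t_n = 8π/(11·2^n). Then for every α ∈ (0,1) and every real p with 1 ≤ p < ∞: lim_{n→∞} t_n^{−α} · 2^{ns} · ( ∫₀^{2π} |g(x − t_n) − g(x)|^p dx )^{1/p} = +∞, even though t_n → 0⁺. -/
open Real Filter intervalIntegral

-- basic single-cosine integral
lemma aux_int_cos (k φ : ℝ) (m : ℤ) (hm : (m:ℝ) = k) (h0 : k ≠ 0) :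
    ∫ x in (0:ℝ)..(2*π), Real.cos (k*x + φ) = 0 := by
  have := intervalIntegral.integral_comp_mul_add (a := 0) (b := 2*π) Real.cos h0 φ
  rw [this]
  rw [integral_cos]
  have : k * (2*π) + φ = φ + m * (2*π) := by rw [hm]; ring
  rw [this, Real.sin_add_int_mul_two_pi]
  simp

lemma aux_ii (a b : ℝ) : IntervalIntegrable (fun x => Real.cos (a*x+b)) MeasureTheory.volume 0 (2*π) :=
  (Real.continuous_cos.comp (by fun_prop)).intervalIntegrable _ _

lemma aux_ii' (b : ℝ) : IntervalIntegrable (fun _ : ℝ => Real.cos b) MeasureTheory.volume 0 (2*π) :=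
  intervalIntegrable_const

-- orthogonality: frequencies differ
lemma aux_orth (A B φ : ℝ) (mA mB : ℤ) (hA : (mA:ℝ) = A) (hB : (mB:ℝ) = B)
    (h1 : A + B ≠ 0) (h2 : A - B ≠ 0) :
    ∫ x in (0:ℝ)..(2*π), Real.cos (A*x + φ) * Real.cos (B*x) = 0 := by
  have key : ∀ x : ℝ, Real.cos (A*x + φ) * Real.cos (B*x)
      = (Real.cos ((A-B)*x + φ) + Real.cos ((A+B)*x + φ)) / 2 := by
    intro x
    have := Real.two_mul_cos_mul_cos (A*x + φ) (B*x)
    have h3 : A*x + φ - B*x = (A-B)*x + φ := by ring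
    have h4 : A*x + φ + B*x = (A+B)*x + φ := by ring
    rw [h3, h4] at this
    linarith
  simp only [key]
  rw [intervalIntegral.integral_div]
  rw [intervalIntegral.integral_add (aux_ii _ _) (aux_ii _ _)]
  rw [aux_int_cos (A-B) φ (mA - mB) (by push_cast [hA, hB]; ring) h2,
    aux_int_cos (A+B) φ (mA + mB) (by push_cast [hA, hB]; ring) h1]
  norm_num

-- same frequency
lemma aux_same (A φ : ℝ) (mA : ℤ) (hA : (mA:ℝ) = A) (h0 : A ≠ 0) :
    ∫ x in (0:ℝ)..(2*π), Real.cos (A*x + φ) * Real.cos (A*x) = π * Real.cos φ := by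
  have key : ∀ x : ℝ, Real.cos (A*x + φ) * Real.cos (A*x)
      = (Real.cos φ + Real.cos ((A+A)*x + φ)) / 2 := by
    intro x
    have := Real.two_mul_cos_mul_cos (A*x + φ) (A*x)
    have h3 : A*x + φ - A*x = φ := by ring
    have h4 : A*x + φ + A*x = (A+A)*x + φ := by ring
    rw [h3, h4] at this
    linarith
  simp only [key]
  rw [intervalIntegral.integral_div]
  rw [intervalIntegral.integral_add (aux_ii' _) (aux_ii _ _)]
  rw [aux_int_cos (A+A) φ (mA + mA) (by push_cast [hA]; ring)
    (by intro h; apply h0; linarith)]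
  rw [intervalIntegral.integral_const]
  simp
  ring

open MeasureTheory in
lemma aux_swap (a : ℕ → ℝ) (ha : Summable a) (F : ℕ → ℝ → ℝ)
    (hFc : ∀ j, Continuous (F j)) (hFb : ∀ j x, |F j x| ≤ a j) :
    ∫ x in (0:ℝ)..(2*π), ∑' j, F j x = ∑' j, ∫ x in (0:ℝ)..(2*π), F j x := by
  have h02 : (0:ℝ) ≤ 2*π := by positivity
  simp only [intervalIntegral.integral_of_le h02]
  rw [MeasureTheory.integral_tsum (fun i => (hFc i).aestronglyMeasurable)]
  have hb : ∀ i, ∫⁻ x in Set.Ioc (0:ℝ) (2*π), ‖F i x‖₊ ≤ ENNReal.ofReal (a i * (2*π)) := by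
    intro i
    calc ∫⁻ x in Set.Ioc (0:ℝ) (2*π), ‖F i x‖₊
        ≤ ∫⁻ _ in Set.Ioc (0:ℝ) (2*π), ENNReal.ofReal (a i) := by
          apply lintegral_mono
          intro x
          dsimp only; rw [show (‖F i x‖₊ : ENNReal) = ENNReal.ofReal ‖F i x‖ from (ofReal_norm _).symm]
          exact ENNReal.ofReal_le_ofReal ((Real.norm_eq_abs _) ▸ hFb i x)
      _ = ENNReal.ofReal (a i) * volume (Set.Ioc (0:ℝ) (2*π)) := by
          rw [lintegral_const, Measure.restrict_apply_univ]
      _ = ENNReal.ofReal (a i * (2*π)) := by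
          rw [Real.volume_Ioc, ENNReal.ofReal_mul]
          · norm_num
          · exact le_trans (abs_nonneg _) (hFb i 0)
  apply ne_top_of_le_ne_top _ (ENNReal.tsum_le_tsum hb)
  rw [← ENNReal.ofReal_tsum_of_nonneg
    (fun i => mul_nonneg (le_trans (abs_nonneg _) (hFb i 0)) (by positivity))
    (ha.mul_right _)]
  exact ENNReal.ofReal_ne_top

lemma aux_lp_lower (f : ℝ → ℝ) (hf : Continuous f) (p : ℝ) (hp : 1 ≤ p) (b : ℝ) (hb : 0 < b)
    (hI : b ≤ ∫ x in (0:ℝ)..(2*π), |f x|) :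
    (2*π)^(1/p) * (b/(4*π)) ≤ (∫ x in (0:ℝ)..(2*π), |f x|^p)^(1/p) := by
  have hp0 : 0 < p := lt_of_lt_of_le one_pos hp
  set lam : ℝ := 4*π/b with hlam
  have hlampos : 0 < lam := by positivity
  have key0 : ∀ u : ℝ, 0 ≤ u → u ≤ 1 + u ^ p := by
    intro u hu
    rcases le_or_gt u 1 with h | h
    · have : (0:ℝ) ≤ u ^ p := Real.rpow_nonneg hu p
      linarith
    · have h2 : u ^ (1:ℝ) ≤ u ^ p := Real.rpow_le_rpow_of_exponent_le h.le hp
      rw [Real.rpow_one] at h2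
      linarith
  have hpt : ∀ x, lam * |f x| ≤ 1 + lam^p * |f x|^p := by
    intro x
    have h0 : (0:ℝ) ≤ lam * |f x| := by positivity
    have := key0 (lam * |f x|) h0
    rwa [Real.mul_rpow hlampos.le (abs_nonneg _)] at this
  have hcont1 : Continuous fun x => lam * |f x| := by fun_prop
  have hcontp : Continuous fun x => |f x| ^ p := by
    apply Continuous.rpow_const (by fun_prop)
    exact fun x => Or.inr hp0.le
  have hcont2 : Continuous fun x => 1 + lam^p * |f x|^p := by
    apply Continuous.add continuous_const (Continuous.mul continuous_const hcontp)
  have h02 : (0:ℝ) ≤ 2*π := by positivity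
  have hint : ∫ x in (0:ℝ)..(2*π), lam * |f x| ≤ ∫ x in (0:ℝ)..(2*π), (1 + lam^p * |f x|^p) :=
    intervalIntegral.integral_mono_on h02 (hcont1.intervalIntegrable _ _)
      (hcont2.intervalIntegrable _ _) (fun x _ => hpt x)
  rw [intervalIntegral.integral_const_mul] at hint
  rw [intervalIntegral.integral_add (f := fun _ => (1:ℝ)) (g := fun x => lam^p * |f x|^p) (intervalIntegrable_const)
    ((Continuous.mul continuous_const hcontp : Continuous fun x => lam^p * |f x|^p).intervalIntegrable _ _),
    intervalIntegral.integral_const, intervalIntegral.integral_const_mul] at hint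
  set J : ℝ := ∫ x in (0:ℝ)..(2*π), |f x|^p with hJ
  have hlamI : 4*π ≤ lam * ∫ x in (0:ℝ)..(2*π), |f x| := by
    rw [hlam]
    rw [div_mul_eq_mul_div, le_div_iff₀ hb]
    exact mul_le_mul_of_nonneg_left hI (by positivity)
  have hJge : 2*π * (b/(4*π))^p ≤ J := by
    have h1 : 2*π ≤ lam^p * J := by
      simp only [smul_eq_mul, sub_zero, mul_one] at hint
      linarith
    have hlp : (0:ℝ) < lam^p := Real.rpow_pos_of_pos hlampos p
    have h2 : (b/(4*π)) = lam⁻¹ := by rw [hlam]; field_simp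
    rw [h2, Real.inv_rpow hlampos.le, ← div_eq_mul_inv, div_le_iff₀ hlp]
    linarith
  calc (2*π)^(1/p) * (b/(4*π))
      = (2*π * (b/(4*π))^p)^(1/p) := by
        rw [Real.mul_rpow h02 (Real.rpow_nonneg (by positivity) p)]
        congr 1
        rw [← Real.rpow_mul (by positivity : (0:ℝ) ≤ b/(4*π)),
          mul_one_div, div_self hp0.ne', Real.rpow_one]
    _ ≤ J^(1/p) := Real.rpow_le_rpow (by positivity) hJge (by positivity)

noncomputable def aa (s : ℝ) (j : ℕ) : ℝ := ((j:ℝ)+3)^(-2:ℝ) * (2:ℝ)^(-(((j:ℝ)+3))*s)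
noncomputable def cc (j : ℕ) : ℝ := (11/8) * 2^(j+3)

lemma aa_pos (s : ℝ) (j : ℕ) : 0 < aa s j := by
  unfold aa
  have h1 : (0:ℝ) < ((j:ℝ)+3)^(-2:ℝ) := Real.rpow_pos_of_pos (by positivity) _
  have h2 : (0:ℝ) < (2:ℝ)^(-(((j:ℝ)+3))*s) := Real.rpow_pos_of_pos (by norm_num) _
  positivity

lemma cc_pos (j : ℕ) : 0 < cc j := by unfold cc; positivity

lemma cc_eq_int (j : ℕ) : ((11 * 2^j : ℤ) : ℝ) = cc j := by
  unfold cc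
  push_cast
  rw [pow_add]
  ring

lemma cc_inj (j m : ℕ) (h : j ≠ m) : cc j ≠ cc m := by
  intro he
  apply h
  have : (11 * 2^j : ℤ) = (11 * 2^m : ℤ) := by
    have := (cc_eq_int j).trans (he.trans (cc_eq_int m).symm)
    exact_mod_cast this
  have h2 : (2:ℕ)^j = 2^m := by
    have h2' : (2:ℤ)^j = 2^m := by linarith
    exact_mod_cast h2'
  exact Nat.pow_right_injective (le_refl 2) h2

lemma aa_summable (s : ℝ) (hs : 0 < s) : Summable (aa s) := by
  set r : ℝ := (2:ℝ)^(-s) with hr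
  have hr0 : 0 < r := Real.rpow_pos_of_pos (by norm_num) _
  have hr1 : r < 1 := Real.rpow_lt_one_of_one_lt_of_neg (by norm_num) (by linarith)
  refine Summable.of_nonneg_of_le (fun j => (aa_pos s j).le) ?_
    (summable_geometric_of_lt_one hr0.le hr1)
  · intro j
    unfold aa
    have h1 : ((j:ℝ)+3)^(-2:ℝ) ≤ 1 :=
      Real.rpow_le_one_of_one_le_of_nonpos (by push_cast; linarith) (by norm_num)
    have h2 : (2:ℝ)^(-(((j:ℝ)+3))*s) = r^(j+3) := by
      rw [hr, ← Real.rpow_natCast ((2:ℝ)^(-s)) (j+3), ← Real.rpow_mul (by norm_num)]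
      congr 1
      push_cast
      ring
    have h3 : r^(j+3) ≤ r^j := pow_le_pow_of_le_one hr0.le hr1.le (Nat.le_add_right j 3)
    calc ((j:ℝ)+3)^(-2:ℝ) * (2:ℝ)^(-(((j:ℝ)+3))*s)
        ≤ 1 * (2:ℝ)^(-(((j:ℝ)+3))*s) := by
          apply mul_le_mul_of_nonneg_right h1 (Real.rpow_pos_of_pos (by norm_num) _).le
      _ = r^(j+3) := by rw [one_mul, h2]
      _ ≤ r^j := h3

lemma term_summable (s : ℝ) (hs : 0 < s) (y : ℝ) :
    Summable (fun j => aa s j * Real.cos (cc j * y)) := by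
  apply Summable.of_abs
  refine Summable.of_nonneg_of_le (fun j => abs_nonneg _) ?_ (aa_summable s hs)
  intro j
  rw [abs_mul, abs_of_pos (aa_pos s j)]
  calc aa s j * |Real.cos (cc j * y)| ≤ aa s j * 1 :=
        mul_le_mul_of_nonneg_left (Real.abs_cos_le_one _) (aa_pos s j).le
    _ = aa s j := mul_one _

lemma g_repr (s : ℝ) (g : ℝ → ℝ)
    (hg : ∀ x : ℝ, g x = ∑' j : ℕ,
      ((j : ℝ) + 3) ^ (-2 : ℝ) * (2 : ℝ) ^ (-(((j : ℝ) + 3)) * s)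
        * Real.cos ((11 / 8) * 2 ^ (j + 3) * x)) :
    ∀ x, g x = ∑' j : ℕ, aa s j * Real.cos (cc j * x) := by
  intro x
  rw [hg x]
  rfl

lemma g_cont (s : ℝ) (hs : 0 < s) (g : ℝ → ℝ)
    (hgr : ∀ x, g x = ∑' j : ℕ, aa s j * Real.cos (cc j * x)) : Continuous g := by
  have : g = fun x => ∑' j : ℕ, aa s j * Real.cos (cc j * x) := funext hgr
  rw [this]
  apply continuous_tsum (u := aa s)
  · intro j
    fun_prop
  · exact aa_summable s hs
  · intro j x
    rw [Real.norm_eq_abs, abs_mul, abs_of_pos (aa_pos s j)]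
    calc aa s j * |Real.cos (cc j * x)| ≤ aa s j * 1 :=
          mul_le_mul_of_nonneg_left (Real.abs_cos_le_one _) (aa_pos s j).le
      _ = aa s j := mul_one _

lemma g_diff (s : ℝ) (hs : 0 < s) (g : ℝ → ℝ)
    (hgr : ∀ x, g x = ∑' j : ℕ, aa s j * Real.cos (cc j * x)) (T x : ℝ) :
    g (x - T) - g x = ∑' j : ℕ, aa s j * (Real.cos (cc j * (x - T)) - Real.cos (cc j * x)) := by
  rw [hgr (x - T), hgr x, ← Summable.tsum_sub (term_summable s hs (x - T)) (term_summable s hs x)]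
  exact tsum_congr (fun j => (mul_sub _ _ _).symm)

lemma term_int (s : ℝ) (m j : ℕ) (T : ℝ) (hT : T = 8*π/(11*2^(m+3))) :
    ∫ x in (0:ℝ)..(2*π), aa s j * (Real.cos (cc j*(x-T)) - Real.cos (cc j*x)) * Real.cos (cc m * x)
    = if j = m then -(2*π)*aa s m else 0 := by
  have hrw : ∀ x : ℝ, aa s j * (Real.cos (cc j*(x-T)) - Real.cos (cc j*x)) * Real.cos (cc m*x)
      = aa s j * (Real.cos (cc j*x + (-(cc j*T))) * Real.cos (cc m*x))
        - aa s j * (Real.cos (cc j*x + 0) * Real.cos (cc m*x)) := by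
    intro x
    have h1 : cc j*(x-T) = cc j*x + (-(cc j*T)) := by ring
    rw [h1, add_zero]
    ring
  simp only [hrw]
  have hii : ∀ (A B φ : ℝ), IntervalIntegrable
      (fun x => aa s j * (Real.cos (A*x + φ) * Real.cos (B*x))) MeasureTheory.volume 0 (2*π) := by
    intro A B φ
    apply Continuous.intervalIntegrable
    fun_prop
  rw [intervalIntegral.integral_sub (hii _ _ _) (hii _ _ _),
    intervalIntegral.integral_const_mul, intervalIntegral.integral_const_mul]
  by_cases hjm : j = m
  · subst hjm
    have hphi : cc j * T = π := by
      rw [hT]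
      unfold cc
      field_simp
    rw [hphi]
    rw [aux_same (cc j) (-π) (11*2^j) (cc_eq_int j) (cc_pos j).ne',
      aux_same (cc j) 0 (11*2^j) (cc_eq_int j) (cc_pos j).ne']
    simp [Real.cos_pi]
    ring
  · have h1 : cc j + cc m ≠ 0 := by
      have := cc_pos j; have := cc_pos m; positivity
    have h2 : cc j - cc m ≠ 0 := sub_ne_zero.mpr (cc_inj j m hjm)
    rw [aux_orth (cc j) (cc m) (-(cc j*T)) (11*2^j) (11*2^m) (cc_eq_int j) (cc_eq_int m) h1 h2,
      aux_orth (cc j) (cc m) 0 (11*2^j) (11*2^m) (cc_eq_int j) (cc_eq_int m) h1 h2]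
    simp [hjm]

lemma key_int (s : ℝ) (hs : 0 < s) (g : ℝ → ℝ)
    (hgr : ∀ x, g x = ∑' j : ℕ, aa s j * Real.cos (cc j * x)) (m : ℕ) (T : ℝ)
    (hT : T = 8*π/(11*2^(m+3))) :
    ∫ x in (0:ℝ)..(2*π), (g (x - T) - g x) * Real.cos (cc m * x) = -(2*π) * aa s m := by
  have hrw : ∀ x : ℝ, (g (x - T) - g x) * Real.cos (cc m * x)
      = ∑' j : ℕ, aa s j * (Real.cos (cc j*(x-T)) - Real.cos (cc j*x)) * Real.cos (cc m * x) := by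
    intro x
    rw [g_diff s hs g hgr T x, ← tsum_mul_right]
  simp only [hrw]
  rw [aux_swap (fun j => 2 * aa s j) ((aa_summable s hs).mul_left 2)
    (fun j => fun x => aa s j * (Real.cos (cc j*(x-T)) - Real.cos (cc j*x)) * Real.cos (cc m * x))
    (fun j => by fun_prop) ?_]
  · simp only [term_int s m _ T hT]
    exact tsum_ite_eq m (fun _ => -(2*π) * aa s m)
  · intro j x
    rw [abs_mul, abs_mul, abs_of_pos (aa_pos s j)]
    have h1 : |Real.cos (cc j*(x-T)) - Real.cos (cc j*x)| ≤ 2 := by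
      calc |Real.cos (cc j*(x-T)) - Real.cos (cc j*x)|
          ≤ |Real.cos (cc j*(x-T))| + |Real.cos (cc j*x)| := abs_sub _ _
        _ ≤ 1 + 1 := add_le_add (Real.abs_cos_le_one _) (Real.abs_cos_le_one _)
        _ = 2 := by norm_num
    have h2 : |Real.cos (cc m * x)| ≤ 1 := Real.abs_cos_le_one _
    have h3 := (aa_pos s j).le
    calc aa s j * |Real.cos (cc j*(x-T)) - Real.cos (cc j*x)| * |Real.cos (cc m * x)|
        ≤ aa s j * 2 * 1 := by
          apply mul_le_mul (mul_le_mul_of_nonneg_left h1 h3) h2 (abs_nonneg _) (by positivity)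
      _ = 2 * aa s j := by ring

lemma l1_lower (s : ℝ) (hs : 0 < s) (g : ℝ → ℝ)
    (hgr : ∀ x, g x = ∑' j : ℕ, aa s j * Real.cos (cc j * x)) (m : ℕ) (T : ℝ)
    (hT : T = 8*π/(11*2^(m+3))) :
    2*π * aa s m ≤ ∫ x in (0:ℝ)..(2*π), |g (x - T) - g x| := by
  have hgc : Continuous g := g_cont s hs g hgr
  have hc : Continuous fun x => g (x - T) - g x := by fun_prop
  have h02 : (0:ℝ) ≤ 2*π := by positivity
  have key := key_int s hs g hgr m T hT
  have h1 : 2*π * aa s m = |∫ x in (0:ℝ)..(2*π), (g (x - T) - g x) * Real.cos (cc m * x)| := by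
    rw [key, abs_of_nonpos (by nlinarith [aa_pos s m, Real.pi_pos])]
    ring
  rw [h1]
  calc |∫ x in (0:ℝ)..(2*π), (g (x - T) - g x) * Real.cos (cc m * x)|
      ≤ ∫ x in (0:ℝ)..(2*π), |(g (x - T) - g x) * Real.cos (cc m * x)| :=
        intervalIntegral.abs_integral_le_integral_abs h02
    _ ≤ ∫ x in (0:ℝ)..(2*π), |g (x - T) - g x| := by
        apply intervalIntegral.integral_mono_on h02
          ((Continuous.abs (by fun_prop)).intervalIntegrable _ _)
          (hc.abs.intervalIntegrable _ _)
        intro x _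
        rw [abs_mul]
        calc |g (x - T) - g x| * |Real.cos (cc m * x)| ≤ |g (x - T) - g x| * 1 :=
              mul_le_mul_of_nonneg_left (Real.abs_cos_le_one _) (abs_nonneg _)
          _ = _ := mul_one _

lemma diverge (C α : ℝ) (hC : 0 < C) (hα : 0 < α) :
    Tendsto (fun n : ℕ => C * (2:ℝ)^((n:ℝ)*α) * ((n:ℝ))^(-2:ℝ)) atTop atTop := by
  set c : ℝ := α * Real.log 2 with hc
  have hcpos : 0 < c := mul_pos hα (Real.log_pos (by norm_num))
  have h1 : Tendsto (fun n : ℕ => (n:ℝ)*c) atTop atTop :=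
    tendsto_natCast_atTop_atTop.atTop_mul_const hcpos
  have h3 : Tendsto (fun n : ℕ => Real.exp ((n:ℝ)*c) / ((n:ℝ)*c)^2) atTop atTop :=
    (Real.tendsto_exp_div_pow_atTop 2).comp h1
  have h4 : Tendsto (fun n : ℕ => (C*c^2) * (Real.exp ((n:ℝ)*c) / ((n:ℝ)*c)^2)) atTop atTop :=
    h3.const_mul_atTop (by positivity)
  apply h4.congr'
  filter_upwards [eventually_ge_atTop 1] with n hn
  have hn0 : (0:ℝ) < (n:ℝ) := by exact_mod_cast Nat.lt_of_lt_of_le Nat.zero_lt_one hn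
  have e1 : (2:ℝ)^((n:ℝ)*α) = Real.exp ((n:ℝ)*c) := by
    rw [Real.rpow_def_of_pos (by norm_num : (0:ℝ) < 2)]
    congr 1
    rw [hc]; ring
  have e2 : ((n:ℝ))^(-2:ℝ) = (((n:ℝ))^(2:ℕ))⁻¹ := by
    rw [show (-2:ℝ) = -((2:ℕ):ℝ) by norm_num, Real.rpow_neg hn0.le, Real.rpow_natCast]
  rw [e1, e2]
  field_simp

/-- For `s > 0`, `g(x) = Σ_{j=3}^∞ j^{-2} 2^{-js} cos((11/8)·2^j·x)` and
`t_n = 8π/(11·2^n)`: for every `α ∈ (0,1)` and `1 ≤ p < ∞`,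
`t_n^{-α} · 2^{ns} · ‖g(·-t_n) - g‖_{L^p(0,2π)} → +∞`, even though `t_n → 0⁺`. -/
theorem stmt_10 (s : ℝ) (hs : 0 < s) (g : ℝ → ℝ)
    (hg : ∀ x : ℝ, g x = ∑' j : ℕ,
      ((j : ℝ) + 3) ^ (-2 : ℝ) * (2 : ℝ) ^ (-(((j : ℝ) + 3)) * s)
        * Real.cos ((11 / 8) * 2 ^ (j + 3) * x))
    (t : ℕ → ℝ) (ht : ∀ n, t n = 8 * π / (11 * 2 ^ n))
    (α : ℝ) (hα : α ∈ Set.Ioo (0 : ℝ) 1) (p : ℝ) (hp : 1 ≤ p) :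
    Tendsto (fun n : ℕ =>
        (t n) ^ (-α) * (2 : ℝ) ^ ((n : ℝ) * s)
          * (∫ x in (0:ℝ)..(2 * π), |g (x - t n) - g x| ^ p) ^ (1 / p))
      atTop atTop ∧
    Tendsto t atTop (nhdsWithin 0 (Set.Ioi 0)) := by
  obtain ⟨hα0, hα1⟩ := hα
  have hgr := g_repr s g hg
  have hgc := g_cont s hs g hgr
  have h2π : (0:ℝ) < 2*π := by positivity
  constructor
  · set C : ℝ := π^(-α) * (2*π)^(1/p) / 2 with hC
    have hApos : (0:ℝ) < π^(-α) := Real.rpow_pos_of_pos Real.pi_pos _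
    have hBpos : (0:ℝ) < (2*π)^(1/p) := Real.rpow_pos_of_pos h2π _
    have hCpos : 0 < C := by rw [hC]; positivity
    apply tendsto_atTop_mono' atTop ?_ (diverge C α hCpos hα0)
    filter_upwards [eventually_ge_atTop 3] with n hn
    obtain ⟨m, rfl⟩ : ∃ m, n = m + 3 := ⟨n - 3, by omega⟩
    have hT : t (m+3) = 8*π/(11*2^(m+3)) := ht (m+3)
    have htnpos : 0 < t (m+3) := by rw [hT]; positivity
    have hf : Continuous fun x => g (x - t (m+3)) - g x := by fun_prop
    have hIlow := l1_lower s hs g hgr m (t (m+3)) hT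
    have haap := aa_pos s m
    have hb : 0 < 2*π*aa s m := by positivity
    have hLp := aux_lp_lower (fun x => g (x - t (m+3)) - g x) hf p hp (2*π*aa s m) hb hIlow
    have heq1 : (2*π*aa s m)/(4*π) = aa s m/2 := by
      field_simp
      ring
    rw [heq1] at hLp
    -- step C : lower bound on t^(-α)
    have hk : (0:ℝ) < 2^(m+3) := by positivity
    have hle : t (m+3) ≤ π/2^(m+3) := by
      rw [hT, div_le_div_iff₀ (by positivity) hk]
      nlinarith [Real.pi_pos, hk, mul_pos Real.pi_pos hk]
    have h1 : (t (m+3))^α ≤ (π/2^(m+3))^α := Real.rpow_le_rpow htnpos.le hle hα0.le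
    have hqpos : (0:ℝ) < (t (m+3))^α := Real.rpow_pos_of_pos htnpos α
    have h2 : ((π/2^(m+3))^α)⁻¹ ≤ ((t (m+3))^α)⁻¹ := by
      apply inv_anti₀ hqpos h1
    have hstepC : π^(-α) * (2:ℝ)^((((m+3:ℕ)):ℝ)*α) ≤ (t (m+3))^(-α) := by
      rw [Real.rpow_neg htnpos.le]
      refine le_trans (le_of_eq ?_) h2
      rw [Real.div_rpow Real.pi_pos.le hk.le, inv_div]
      rw [← Real.rpow_natCast (2:ℝ) (m+3), ← Real.rpow_mul (by norm_num : (0:ℝ) ≤ 2)]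
      rw [Real.rpow_neg Real.pi_pos.le]
      ring
    -- exponent cancellation
    have e1 : (2:ℝ)^((((m+3:ℕ)):ℝ)*s) * (2:ℝ)^(-(((m:ℝ)+3))*s) = 1 := by
      rw [← Real.rpow_add (by norm_num : (0:ℝ) < 2)]
      rw [show (((m+3:ℕ)):ℝ)*s + (-(((m:ℝ)+3))*s) = 0 by push_cast; ring]
      exact Real.rpow_zero 2
    have hJnn : (0:ℝ) ≤ (∫ x in (0:ℝ)..(2*π), |g (x - t (m+3)) - g x|^p)^(1/p) := by
      apply Real.rpow_nonneg
      apply intervalIntegral.integral_nonneg h2π.le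
      intro x _
      exact Real.rpow_nonneg (abs_nonneg _) p
    have hpow2 : (0:ℝ) < (2:ℝ)^((((m+3:ℕ)):ℝ)*s) := Real.rpow_pos_of_pos (by norm_num) _
    calc C * (2:ℝ)^((((m+3:ℕ)):ℝ)*α) * ((((m+3:ℕ)):ℝ))^(-2:ℝ)
        = (π^(-α) * (2:ℝ)^((((m+3:ℕ)):ℝ)*α))
            * ((2:ℝ)^((((m+3:ℕ)):ℝ)*s) * ((2*π)^(1/p) * aa s m / 2)) := by
          rw [hC]
          unfold aa
          push_cast
          push_cast at e1
          linear_combination (-(π^(-α) * (2*π)^(1/p) * (2:ℝ)^(((m:ℝ)+3)*α)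
            * (((m:ℝ)+3))^(-2:ℝ) / 2)) * e1
      _ ≤ (t (m+3))^(-α) * ((2:ℝ)^((((m+3:ℕ)):ℝ)*s) * ((2*π)^(1/p) * aa s m / 2)) := by
          apply mul_le_mul_of_nonneg_right hstepC
          positivity
      _ ≤ (t (m+3))^(-α) * ((2:ℝ)^((((m+3:ℕ)):ℝ)*s)
            * (∫ x in (0:ℝ)..(2*π), |g (x - t (m+3)) - g x|^p)^(1/p)) := by
          apply mul_le_mul_of_nonneg_left _ (Real.rpow_pos_of_pos htnpos _).le
          apply mul_le_mul_of_nonneg_left _ hpow2.le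
          calc (2*π)^(1/p) * aa s m / 2 = (2*π)^(1/p) * (aa s m / 2) := by ring
            _ ≤ _ := hLp
      _ = (t (m+3))^(-α) * (2:ℝ)^((((m+3:ℕ)):ℝ)*s)
            * (∫ x in (0:ℝ)..(2*π), |g (x - t (m+3)) - g x|^p)^(1/p) := by ring
  · apply tendsto_nhdsWithin_of_tendsto_nhds_of_eventually_within
    · have heq : t = fun n : ℕ => (8*π/11) * (1/2:ℝ)^n := by
        funext n
        rw [ht n, div_pow, one_pow]
        field_simp
      rw [heq]
      have := tendsto_pow_atTop_nhds_zero_of_lt_one (by norm_num : (0:ℝ) ≤ 1/2)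
        (by norm_num : (1/2:ℝ) < 1)
      have h2 := this.const_mul (8*π/11)
      rwa [mul_zero] at h2
    · filter_upwards with n
      rw [ht n]
      have : (0:ℝ) < 8*π/(11*2^n) := by positivity
      exact this
end

section
/- Let s > 0, and for n ≥ 3 set t_n = 8π/(11·2^n) and ε_n = (8/(11π))·2^{−n}. Let f(x) = Σ_{j=3}^∞ 2^{−js} cos((11/8)·2^j·x) and F_n(t,x) = Σ_{j=3}^∞ 2^{−js} e^{−ε_n(121/64)·2^{2j}·t} cos((11/8)·2^j·(x − t)). Then ε_n·(121/64)·2^{2n}·t_n = 1, and the Fourier coefficient of the 2π-periodic function x ↦ F_n(t_n, x) − f(x − t_n) at the frequency 11·2^{n−3}, with normalization ĝ(k) = (1/(2π)) ∫₀^{2π} g(x) e^{−ikx} dx, has absolute value (1 − e^{−1})·2^{−ns}/2. -/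
open Real Complex

lemma orth (a : ℤ) : ∫ x in (0:ℝ)..(2*π), Complex.exp ((a:ℂ) * Complex.I * x)
    = if a = 0 then (2*π : ℂ) else 0 := by
  rcases eq_or_ne a 0 with h | h
  · simp [h]
  · rw [if_neg h]
    have hc : (a:ℂ) * Complex.I ≠ 0 := by
      simp [Complex.I_ne_zero, h]
    rw [integral_exp_mul_complex hc]
    have : (a:ℂ) * Complex.I * (2*π : ℝ) = (a:ℤ) * (2 * π * Complex.I) := by
      push_cast; ring
    rw [this, Complex.exp_int_mul_two_pi_mul_I]
    simp

lemma cos_int (c t : ℝ) (m k : ℕ) (hm : 0 < m) (hk : 0 < k) :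
    ∫ x in (0:ℝ)..(2*π),
      ((c * Real.cos (m * (x - t)) : ℝ) : ℂ) * Complex.exp (-Complex.I * k * x)
    = if m = k then (c:ℂ) * π * Complex.exp (-Complex.I * m * t) else 0 := by
  have key : ∀ x : ℝ, ((c * Real.cos (m * (x - t)) : ℝ) : ℂ) * Complex.exp (-Complex.I * k * x)
      = ((c:ℂ) * Complex.exp (-Complex.I * m * t)/2)
          * Complex.exp ((((m:ℤ) - k : ℤ):ℂ) * Complex.I * x)
        + ((c:ℂ) * Complex.exp (Complex.I * m * t)/2)
          * Complex.exp (((-((m:ℤ) + k) : ℤ):ℂ) * Complex.I * x) := by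
    intro x
    rw [Complex.ofReal_mul, Complex.ofReal_cos, Complex.cos]
    have hA : Complex.exp ((↑(↑m * (x - t)) : ℂ) * I) * Complex.exp (-Complex.I * k * x)
        = Complex.exp (-Complex.I * m * t) * Complex.exp ((((m:ℤ) - k : ℤ):ℂ) * Complex.I * x) := by
      rw [← Complex.exp_add, ← Complex.exp_add]; congr 1; push_cast; ring
    have hB : Complex.exp (-(↑(↑m * (x - t)) : ℂ) * I) * Complex.exp (-Complex.I * k * x)
        = Complex.exp (Complex.I * m * t) * Complex.exp (((-((m:ℤ) + k) : ℤ):ℂ) * Complex.I * x) := by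
      rw [← Complex.exp_add, ← Complex.exp_add]; congr 1; push_cast; ring
    calc (c:ℂ) * ((Complex.exp ((↑(↑m * (x - t)) : ℂ) * I) + Complex.exp (-(↑(↑m * (x - t)) : ℂ) * I)) / 2)
          * Complex.exp (-Complex.I * k * x)
        = ((c:ℂ) * (Complex.exp ((↑(↑m * (x - t)) : ℂ) * I) * Complex.exp (-Complex.I * k * x)))/2
          + ((c:ℂ) * (Complex.exp (-(↑(↑m * (x - t)) : ℂ) * I) * Complex.exp (-Complex.I * k * x)))/2 := by ring
      _ = _ := by rw [hA, hB]; ring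
  rw [intervalIntegral.integral_congr (fun x _ => key x),
    intervalIntegral.integral_add, intervalIntegral.integral_const_mul,
    intervalIntegral.integral_const_mul, orth, orth]
  · have h2 : ¬ (-((m:ℤ) + k) = 0) := by omega
    rw [if_neg h2]
    rcases eq_or_ne m k with h | h
    · rw [if_pos (by omega : (m:ℤ) - k = 0), if_pos h]
      ring
    · rw [if_neg (by omega : ¬ ((m:ℤ) - k = 0)), if_neg h]
      ring
  · exact Continuous.intervalIntegrable (by continuity) _ _
  · exact Continuous.intervalIntegrable (by continuity) _ _

set_option maxHeartbeats 1000000 in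
/-- For `s > 0`, `t_n = 8π/(11·2^n)`, `ε_n = (8/(11π))·2^{-n}`,
`f(x) = Σ_{j=3}^∞ 2^{-js} cos((11/8)·2^j·x)` and
`F_n(t,x) = Σ_{j=3}^∞ 2^{-js} e^{-ε_n(121/64)·2^{2j}·t} cos((11/8)·2^j·(x-t))`:
one has `ε_n·(121/64)·2^{2n}·t_n = 1`, and the Fourier coefficient of
`x ↦ F_n(t_n,x) - f(x - t_n)` at frequency `11·2^{n-3}` has absolute value
`(1 - e^{-1})·2^{-ns}/2`. -/
theorem stmt_16 (s : ℝ) (hs : 0 < s) (n : ℕ) (hn : 3 ≤ n) (tn εn : ℝ)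
    (htn : tn = 8 * π / (11 * 2 ^ n)) (hεn : εn = (8 / (11 * π)) * 2 ^ (-(n : ℤ)))
    (f : ℝ → ℝ) (Fn : ℝ → ℝ → ℝ)
    (hf : ∀ x : ℝ, f x = ∑' j : ℕ,
      (2 : ℝ) ^ (-(((j : ℝ) + 3)) * s) * Real.cos ((11 / 8) * 2 ^ (j + 3) * x))
    (hFn : ∀ t x : ℝ, Fn t x = ∑' j : ℕ,
      (2 : ℝ) ^ (-(((j : ℝ) + 3)) * s) * Real.exp (-εn * (121 / 64) * 2 ^ (2 * (j + 3)) * t)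
        * Real.cos ((11 / 8) * 2 ^ (j + 3) * (x - t))) :
    εn * (121 / 64) * 2 ^ (2 * n) * tn = 1 ∧
    ‖(1 / (2 * (π : ℂ))) * ∫ x in (0:ℝ)..(2 * π),
        ((Fn tn x - f (x - tn) : ℝ) : ℂ)
          * Complex.exp (-Complex.I * ((11 * 2 ^ (n - 3) : ℕ) : ℂ) * (x : ℂ))‖
      = (1 - Real.exp (-1)) * (2 : ℝ) ^ (-(n : ℝ) * s) / 2 := by
  have hπ : (0:ℝ) < π := Real.pi_pos
  -- part 1
  have part1 : εn * (121 / 64) * 2 ^ (2 * n) * tn = 1 := by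
    rw [htn, hεn, zpow_neg, zpow_natCast, two_mul, pow_add]
    field_simp
    ring
  refine ⟨part1, ?_⟩
  -- notation
  set a : ℕ → ℝ := fun j => (2:ℝ) ^ (-((j:ℝ) + 3) * s) with ha_def
  set E : ℕ → ℝ := fun j => Real.exp (-εn * (121 / 64) * 2 ^ (2 * (j + 3)) * tn) with hE_def
  have ha_pos : ∀ j, 0 < a j := fun j => Real.rpow_pos_of_pos (by norm_num) _
  have hεpos : 0 < εn := by
    rw [hεn]; positivity
  have htpos : 0 < tn := by
    rw [htn]; positivity
  have hE_pos : ∀ j, 0 < E j := fun j => Real.exp_pos _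
  have hE_le : ∀ j, E j ≤ 1 := by
    intro j
    rw [hE_def]
    simp only
    rw [Real.exp_le_one_iff]
    have hP : (0:ℝ) < 2 ^ (2*(j+3)) := by positivity
    nlinarith [mul_pos (mul_pos hεpos hP) htpos]
  -- summability of a
  have ha : Summable a := by
    have hr1 : (2:ℝ) ^ (-s) < 1 :=
      Real.rpow_lt_one_of_one_lt_of_neg one_lt_two (neg_lt_zero.mpr hs)
    have hr0 : (0:ℝ) ≤ 2 ^ (-s) := Real.rpow_nonneg (by norm_num) _
    have hform : ∀ j : ℕ, a j = ((2:ℝ) ^ (-s)) ^ j * ((2:ℝ) ^ (-s)) ^ 3 := by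
      intro j
      rw [ha_def]
      simp only
      rw [show (-(((j:ℝ)) + 3)) * s = (-s) * (((j + 3 : ℕ) : ℝ)) by push_cast; ring,
        Real.rpow_mul (by norm_num : (0:ℝ) ≤ 2), Real.rpow_natCast, pow_add]
    exact Summable.congr ((summable_geometric_of_lt_one hr0 hr1).mul_right _)
      (fun j => (hform j).symm)
  -- pointwise summability
  have habs_cos : ∀ (j : ℕ) (θ : ℝ), |a j * Real.cos θ| ≤ a j := by
    intro j θ
    rw [abs_mul, abs_of_pos (ha_pos j)]
    nlinarith [Real.abs_cos_le_one θ, (ha_pos j).le, abs_nonneg (Real.cos θ)]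
  have hsum1 : ∀ x : ℝ, Summable (fun j : ℕ => a j * Real.cos ((11/8) * 2 ^ (j+3) * x)) := by
    intro x
    apply ha.of_norm_bounded
    intro j
    exact habs_cos j _
  have hsum2 : ∀ x : ℝ, Summable
      (fun j : ℕ => a j * E j * Real.cos ((11/8) * 2 ^ (j+3) * (x - tn))) := by
    intro x
    apply ha.of_norm_bounded
    intro j
    have h : |a j * E j * Real.cos ((11/8) * 2 ^ (j+3) * (x - tn))|
        = |a j * Real.cos ((11/8) * 2 ^ (j+3) * (x - tn))| * E j := by
      rw [abs_mul, abs_mul, abs_mul, abs_of_pos (hE_pos j)]; ring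
    rw [Real.norm_eq_abs, h]
    calc |a j * Real.cos ((11/8) * 2 ^ (j+3) * (x - tn))| * E j
        ≤ a j * 1 :=
          mul_le_mul (habs_cos j _) (hE_le j) (hE_pos j).le (ha_pos j).le
      _ = a j := mul_one _
  -- the difference as a single sum
  have hdiff : ∀ x : ℝ, Fn tn x - f (x - tn)
      = ∑' j : ℕ, (a j * (E j - 1)) * Real.cos ((11/8) * 2 ^ (j+3) * (x - tn)) := by
    intro x
    rw [hFn tn x, hf (x - tn)]
    have key : (∑' j : ℕ, a j * E j * Real.cos ((11/8) * 2 ^ (j+3) * (x - tn)))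
        - (∑' j : ℕ, a j * Real.cos ((11/8) * 2 ^ (j+3) * (x - tn)))
        = ∑' j : ℕ, (a j * (E j - 1)) * Real.cos ((11/8) * 2 ^ (j+3) * (x - tn)) := by
      rw [← Summable.tsum_sub (hsum2 x) (hsum1 (x - tn))]
      exact tsum_congr fun j => by ring
    exact key
  -- the coefficient sequence
  set c : ℕ → ℝ := fun j => a j * (E j - 1) with hc_def
  have hc_abs : ∀ j, |c j| ≤ a j := by
    intro j
    rw [hc_def]
    simp only
    rw [abs_mul, abs_of_pos (ha_pos j)]
    have h : |E j - 1| ≤ 1 := by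
      rw [abs_le]
      constructor <;> nlinarith [hE_pos j, hE_le j]
    nlinarith [(ha_pos j).le]
  -- frequency
  set k : ℕ := 11 * 2 ^ (n - 3) with hk_def
  have hk : 0 < k := by positivity
  -- complex integrand family
  set g : ℕ → ℝ → ℂ := fun j x =>
    (((c j) * Real.cos ((11 * 2 ^ j : ℕ) * (x - tn)) : ℝ) : ℂ)
      * Complex.exp (-Complex.I * k * x) with hg_def
  have harg : ∀ j : ℕ, ((11 * 2 ^ j : ℕ) : ℝ) = (11/8 : ℝ) * 2 ^ (j+3) := by
    intro j
    push_cast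
    rw [pow_add]
    ring
  -- pointwise identity for the integrand
  have hpt : ∀ x : ℝ, ((Fn tn x - f (x - tn) : ℝ) : ℂ)
      * Complex.exp (-Complex.I * ((11 * 2 ^ (n - 3) : ℕ) : ℂ) * (x : ℂ))
      = ∑' j : ℕ, g j x := by
    intro x
    rw [hdiff x, Complex.ofReal_tsum, tsum_mul_right]
    congr 1
    refine tsum_congr fun j => ?_
    have hj : c j * Real.cos (((11 * 2 ^ j : ℕ):ℝ) * (x - tn))
        = a j * (E j - 1) * Real.cos ((11/8) * 2 ^ (j+3) * (x - tn)) := by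
      simp only [hc_def]
      rw [harg j]
    rw [hj]
  -- swap integral and sum
  have hle : (0:ℝ) ≤ 2 * π := by positivity
  have hmeas : ∀ j : ℕ, MeasureTheory.AEStronglyMeasurable (g j)
      (MeasureTheory.volume.restrict (Set.Ioc (0:ℝ) (2*π))) := by
    intro j
    apply Continuous.aestronglyMeasurable
    rw [hg_def]
    simp only
    apply Continuous.mul
    · exact Complex.continuous_ofReal.comp
        (continuous_const.mul (Real.continuous_cos.comp
          (continuous_const.mul (continuous_id.sub continuous_const))))
    · exact Complex.continuous_exp.comp (continuous_const.mul Complex.continuous_ofReal)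
  have hgbound : ∀ (j : ℕ) (x : ℝ), ‖g j x‖ ≤ a j := by
    intro j x
    rw [hg_def]
    simp only [norm_mul]
    have h1 : ‖(((c j) * Real.cos ((11 * 2 ^ j : ℕ) * (x - tn)) : ℝ) : ℂ)‖ ≤ a j := by
      rw [Complex.norm_real, Real.norm_eq_abs, abs_mul]
      calc |c j| * |Real.cos (((11 * 2 ^ j : ℕ):ℝ) * (x - tn))| ≤ a j * 1 :=
            mul_le_mul (hc_abs j) (Real.abs_cos_le_one _) (abs_nonneg _) (ha_pos j).le
        _ = a j := mul_one _
    have h2 : ‖Complex.exp (-Complex.I * k * x)‖ = 1 := by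
      rw [show -Complex.I * (k:ℂ) * ((x:ℝ):ℂ) = ((-((k:ℝ) * x) : ℝ) : ℂ) * Complex.I by push_cast; ring]
      rw [Complex.norm_exp_ofReal_mul_I]
    rw [h2, mul_one]
    exact h1
  have hswap : (∫ x in (0:ℝ)..(2*π), ∑' j : ℕ, g j x)
      = ∑' j : ℕ, ∫ x in (0:ℝ)..(2*π), g j x := by
    rw [intervalIntegral.integral_of_le hle]
    rw [MeasureTheory.integral_tsum hmeas]
    · exact tsum_congr fun j => (intervalIntegral.integral_of_le hle).symm
    · have hb : ∀ j : ℕ, (∫⁻ x, ‖g j x‖₊ ∂(MeasureTheory.volume.restrict (Set.Ioc (0:ℝ) (2*π))))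
          ≤ (‖a j‖₊ : ENNReal) * ENNReal.ofReal (2*π) := by
        intro j
        calc (∫⁻ x, ‖g j x‖₊ ∂(MeasureTheory.volume.restrict (Set.Ioc (0:ℝ) (2*π))))
            ≤ ∫⁻ _, (‖a j‖₊ : ENNReal) ∂(MeasureTheory.volume.restrict (Set.Ioc (0:ℝ) (2*π))) := by
              apply MeasureTheory.lintegral_mono
              intro x
              have hx := hgbound j x
              simp only [ENNReal.coe_le_coe]
              rw [← NNReal.coe_le_coe]
              simpa [coe_nnnorm, Real.norm_eq_abs, abs_of_pos (ha_pos j)] using hx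
          _ = (‖a j‖₊ : ENNReal) * ENNReal.ofReal (2*π) := by
              rw [MeasureTheory.lintegral_const, MeasureTheory.Measure.restrict_apply_univ,
                Real.volume_Ioc]
              norm_num
      have hsumn : Summable fun j => ‖a j‖₊ := by
        rw [← NNReal.summable_coe]
        apply Summable.congr ha
        intro j
        rw [coe_nnnorm, Real.norm_eq_abs, abs_of_pos (ha_pos j)]
      have := calc (∑' j : ℕ, ∫⁻ x, ‖g j x‖₊ ∂(MeasureTheory.volume.restrict (Set.Ioc (0:ℝ) (2*π))))
          ≤ ∑' j : ℕ, (‖a j‖₊ : ENNReal) * ENNReal.ofReal (2*π) := ENNReal.tsum_le_tsum hb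
        _ = (∑' j : ℕ, (‖a j‖₊ : ENNReal)) * ENNReal.ofReal (2*π) := ENNReal.tsum_mul_right
        _ < ⊤ := by
            apply ENNReal.mul_lt_top
            · exact lt_top_iff_ne_top.mpr (ENNReal.tsum_coe_ne_top_iff_summable.mpr hsumn)
            · exact ENNReal.ofReal_lt_top
      exact this.ne
  -- evaluate each integral
  have heval : ∀ j : ℕ, (∫ x in (0:ℝ)..(2*π), g j x)
      = if 11 * 2 ^ j = k then ((c j : ℝ):ℂ) * π * Complex.exp (-Complex.I * (11 * 2 ^ j : ℕ) * tn)
        else 0 := by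
    intro j
    rw [hg_def]
    simp only
    exact cos_int (c j) tn (11 * 2 ^ j) k (by positivity) hk
  -- collapse the sum
  have hcollapse : (∑' j : ℕ, ∫ x in (0:ℝ)..(2*π), g j x)
      = ((c (n-3) : ℝ):ℂ) * π * Complex.exp (-Complex.I * ((11 * 2 ^ (n-3) : ℕ):ℂ) * tn) := by
    rw [tsum_eq_single (n-3)]
    · rw [heval (n-3), if_pos rfl]
    · intro j hj
      rw [heval j, if_neg]
      rw [hk_def]
      intro h
      apply hj
      have h2 : 2 ^ j = 2 ^ (n-3) := by omega
      have := Nat.pow_right_injective (le_refl 2) h2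
      omega
  -- value of c (n-3)
  have hE_val : E (n-3) = Real.exp (-1) := by
    rw [hE_def]
    simp only
    congr 1
    rw [show (n - 3 + 3) = n by omega]
    rw [show -εn * (121/64) * 2 ^ (2*n) * tn = -(εn * (121/64) * 2 ^ (2*n) * tn) by ring, part1]
  have ha_val : a (n-3) = (2:ℝ) ^ (-(n:ℝ) * s) := by
    rw [ha_def]
    simp only
    congr 1
    have h3 : ((n - 3 : ℕ) : ℝ) = (n : ℝ) - 3 := by
      rw [Nat.cast_sub hn]; norm_num
    rw [h3]
    ring
  have hc_val : c (n-3) = (2:ℝ) ^ (-(n:ℝ) * s) * (Real.exp (-1) - 1) := by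
    rw [hc_def]; simp only; rw [hE_val, ha_val]
  -- final computation
  have hint : (∫ x in (0:ℝ)..(2 * π),
      ((Fn tn x - f (x - tn) : ℝ) : ℂ)
        * Complex.exp (-Complex.I * ((11 * 2 ^ (n - 3) : ℕ) : ℂ) * (x : ℂ)))
      = ((c (n-3) : ℝ):ℂ) * π * Complex.exp (-Complex.I * ((11 * 2 ^ (n-3) : ℕ):ℂ) * tn) := by
    rw [intervalIntegral.integral_congr (fun x _ => hpt x), hswap, hcollapse]
  rw [hint]
  have habs_exp : ‖Complex.exp (-Complex.I * ((11 * 2 ^ (n-3) : ℕ):ℂ) * tn)‖ = 1 := by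
    rw [show -Complex.I * ((11 * 2 ^ (n-3) : ℕ):ℂ) * ((tn:ℝ):ℂ)
        = ((-(((11 * 2 ^ (n-3) : ℕ):ℝ) * tn) : ℝ) : ℂ) * Complex.I by push_cast; ring]
    exact Complex.norm_exp_ofReal_mul_I _
  rw [norm_mul, norm_mul, norm_mul, habs_exp]
  rw [Complex.norm_real, Real.norm_eq_abs, hc_val]
  have he1 : Real.exp (-1) < 1 := by
    rw [Real.exp_lt_one_iff]; norm_num
  have hpow : (0:ℝ) < (2:ℝ) ^ (-(n:ℝ) * s) := Real.rpow_pos_of_pos (by norm_num) _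
  have habs_c : |(2:ℝ) ^ (-(n:ℝ) * s) * (Real.exp (-1) - 1)|
      = (1 - Real.exp (-1)) * (2:ℝ) ^ (-(n:ℝ) * s) := by
    rw [abs_mul, abs_of_pos hpow, abs_of_neg (by linarith : Real.exp (-1) - 1 < 0)]
    ring
  rw [habs_c]
  have h1 : ‖1 / (2 * (π:ℂ))‖ = 1 / (2 * π) := by
    rw [norm_div, norm_mul, Complex.norm_real, Real.norm_eq_abs, abs_of_pos hπ]
    norm_num
  have h2 : ‖((π:ℝ):ℂ)‖ = π := by
    rw [Complex.norm_real, Real.norm_eq_abs, abs_of_pos hπ]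
  rw [h1, h2]
  field_simp
end
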